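/- With the matrices Φ and Ψ built from points h_1, …, h_T ∈ {1, …, n}, the n × n matrix Ψ^T Φ equals Ψ_A^T F Φ_A, where F = diag(m_1, …, m_n) and m_r is the number of indices i with h_i = r. Since Ψ_A^T Φ_A = I_n, the matrix Ψ^T Φ is similar to F; in particular its characteristic polynomial is ∏_{r=1}^n (X − m_r), all its eigenvalues m_1, …, m_n are nonnegative, and Σ_{r=1}^n m_r = T. -/
import Mathlib


open Matrix Polynomial

/-- The row vector `φ(a) ∈ ℝ^n` (0-based indexing: index `a : Fin n` represents the
categorical value `a+1 ∈ {1, …, n}`): entry `1` in column `1` (index `0`); entry `−1`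
in column `a+1` (index `a`) when `a+1 ≥ 2`; entry `+1` in column `a+2` (index `a+1`)
when `a+1 ≤ n−1`; all other entries `0`. -/
def phiRow (n : ℕ) (a : Fin n) (j : Fin n) : ℝ :=
  (if (j : ℕ) = 0 then 1 else 0) +
    (if (j : ℕ) = (a : ℕ) ∧ 1 ≤ (a : ℕ) then -1 else 0) +
      (if (j : ℕ) = (a : ℕ) + 1 then 1 else 0)

/-- The row vector `ψ(a) ∈ ℝ^n` (0-based indexing): its `j`-th entry (1-based column
`j+1`) is `1/n` if `j = 0`, `−j/n` if `1 ≤ j ≤ a`, and `(n−j)/n` if `j > a`. -/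
noncomputable def psiRow (n : ℕ) (a : Fin n) (j : Fin n) : ℝ :=
  if (j : ℕ) = 0 then 1 / n
  else if (j : ℕ) ≤ (a : ℕ) then -(j : ℕ) / n
  else ((n : ℝ) - (j : ℕ)) / n

/-- Conjugation invariance of the characteristic polynomial. -/
lemma my_charpoly_conj {N : Type*} [Fintype N] [DecidableEq N]
    (P A Q : Matrix N N ℝ) (hQP : Q * P = 1) :
    (P * A * Q).charpoly = A.charpoly := by
  have key : charmatrix (P * A * Q)
      = P.map (C : ℝ →+* ℝ[X]) * charmatrix A * Q.map (C : ℝ →+* ℝ[X]) := by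
    have h1 : P.map (C : ℝ →+* ℝ[X]) * Q.map (C : ℝ →+* ℝ[X])
        = (P * Q).map (C : ℝ →+* ℝ[X]) := (Matrix.map_mul).symm
    rw [charmatrix, charmatrix]
    simp only [RingHom.mapMatrix_apply]
    rw [Matrix.mul_sub, Matrix.sub_mul, Matrix.map_mul, Matrix.map_mul]
    congr 1
    have hc := (Matrix.scalar_commute (X : ℝ[X]) (fun r' => Commute.all _ _)
      (P.map (C : ℝ →+* ℝ[X]))).eq
    rw [← hc, mul_assoc, h1, mul_eq_one_comm.mp hQP,
      Matrix.map_one _ (map_zero C) (map_one C), mul_one]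
  have hdet : (Q.map (C : ℝ →+* ℝ[X])).det * (P.map (C : ℝ →+* ℝ[X])).det = 1 := by
    rw [← Matrix.det_mul, ← Matrix.map_mul, hQP,
      Matrix.map_one _ (map_zero C) (map_one C), Matrix.det_one]
  rw [Matrix.charpoly, Matrix.charpoly, key, Matrix.det_mul, Matrix.det_mul]
  calc (P.map (C : ℝ →+* ℝ[X])).det * (charmatrix A).det * (Q.map (C : ℝ →+* ℝ[X])).det
      = (charmatrix A).det *
        ((Q.map (C : ℝ →+* ℝ[X])).det * (P.map (C : ℝ →+* ℝ[X])).det) := by ring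
    _ = (charmatrix A).det := by rw [hdet, mul_one]

lemma sum_psiRow (n : ℕ) (hn : 1 ≤ n) (j : Fin n) :
    ∑ a : Fin n, psiRow n a j = if (j : ℕ) = 0 then 1 else 0 := by
  have hn0 : (n : ℝ) ≠ 0 := Nat.cast_ne_zero.mpr (by omega)
  by_cases hj : (j : ℕ) = 0
  · simp only [psiRow, hj, if_pos rfl, if_true]
    rw [Finset.sum_const, Finset.card_univ, Fintype.card_fin, nsmul_eq_mul]
    field_simp
  · simp only [psiRow, hj, if_neg hj, if_false]
    rw [Fin.sum_univ_eq_sum_range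
      (fun a : ℕ => if (j : ℕ) ≤ a then -(((j : ℕ) : ℝ)) / n
        else ((n : ℝ) - ((j : ℕ) : ℝ)) / n) n]
    rw [Finset.sum_ite, Finset.sum_const, Finset.sum_const]
    have h1 : (Finset.range n).filter (fun a => (j : ℕ) ≤ a) = Finset.Ico (j : ℕ) n := by
      ext x; simp [Finset.mem_Ico]; omega
    have h2 : (Finset.range n).filter (fun a => ¬ (j : ℕ) ≤ a) = Finset.range (j : ℕ) := by
      ext x; simp; omega
    rw [h1, h2, Nat.card_Ico, Finset.card_range, nsmul_eq_mul, nsmul_eq_mul]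
    have hjn : (j : ℕ) ≤ n := le_of_lt j.isLt
    have : ((n - (j : ℕ) : ℕ) : ℝ) = (n : ℝ) - (j : ℕ) := by
      push_cast [Nat.cast_sub hjn]; ring
    rw [this]
    field_simp
    ring

lemma sum_psi_phi (n : ℕ) (hn : 2 ≤ n) (j k : Fin n) :
    ∑ a : Fin n, psiRow n a j * phiRow n a k = if j = k then 1 else 0 := by
  have hn0 : (n : ℝ) ≠ 0 := Nat.cast_ne_zero.mpr (by omega)
  rcases k with ⟨kv, hk⟩
  rcases kv with _ | kv
  ·
    have hφ : ∀ a : Fin n, phiRow n a ⟨0, hk⟩ = 1 := by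
      intro a
      simp only [phiRow]
      split_ifs <;> (first | ring1 | (exfalso; first | assumption | omega) | simp_all)
    simp only [hφ, mul_one]
    rw [sum_psiRow n (by omega) j]
    congr 1
    simp [Fin.ext_iff]
  · have hkv : kv < n := by omega
    have hφ : ∀ a : Fin n, phiRow n a ⟨kv + 1, hk⟩ =
        (if a = (⟨kv + 1, hk⟩ : Fin n) then -1 else 0) +
          (if a = (⟨kv, hkv⟩ : Fin n) then 1 else 0) := by
      intro a
      simp only [phiRow, Fin.ext_iff]
      split_ifs <;> (first | ring1 | (exfalso; first | assumption | omega) | simp_all)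
    simp only [hφ, mul_add, mul_ite, mul_one, mul_neg_one, mul_zero]
    rw [Finset.sum_add_distrib, Finset.sum_ite_eq', Finset.sum_ite_eq']
    simp only [Finset.mem_univ, if_true]
    simp only [psiRow, Fin.ext_iff]
    split_ifs <;>
      (first | ring1 | (exfalso; first | assumption | omega) | (field_simp; try ring1) | simp_all)

theorem psiT_phi_eq_psiA_F_phiA
    (n : ℕ) (hn : 2 ≤ n) (T : ℕ) (h : Fin T → Fin n) :
    let Φ : Matrix (Fin T) (Fin n) ℝ := Matrix.of fun i j => phiRow n (h i) j
    let Ψ : Matrix (Fin T) (Fin n) ℝ := Matrix.of fun i j => psiRow n (h i) j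
    let ΦA : Matrix (Fin n) (Fin n) ℝ := Matrix.of (phiRow n)
    let ΨA : Matrix (Fin n) (Fin n) ℝ := Matrix.of (psiRow n)
    let m : Fin n → ℕ := fun r => (Finset.univ.filter fun i => h i = r).card
    let F : Matrix (Fin n) (Fin n) ℝ := Matrix.diagonal fun r => (m r : ℝ)
    Ψᵀ * Φ = ΨAᵀ * F * ΦA ∧
      ΨAᵀ * ΦA = 1 ∧
      (Ψᵀ * Φ).charpoly = ∏ r : Fin n, (X - C ((m r : ℝ))) ∧
      (∀ r : Fin n, (0 : ℝ) ≤ (m r : ℝ)) ∧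
      ∑ r : Fin n, m r = T := by
  intro Φ Ψ ΦA ΨA m F
  have hone : ΨAᵀ * ΦA = 1 := by
    ext j k
    rw [Matrix.mul_apply]
    simp only [Matrix.transpose_apply, Matrix.of_apply, ΨA, ΦA]
    rw [sum_psi_phi n hn j k]
    simp [Matrix.one_apply]
  have heq : Ψᵀ * Φ = ΨAᵀ * F * ΦA := by
    ext j k
    rw [Matrix.mul_apply]
    simp only [Matrix.transpose_apply, Matrix.of_apply, Ψ, Φ]
    have hrhs : (ΨAᵀ * F * ΦA) j k
        = ∑ b : Fin n, psiRow n b j * (m b : ℝ) * phiRow n b k := by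
      rw [Matrix.mul_apply]
      congr 1; ext b
      rw [Matrix.mul_diagonal]
      simp [ΨA, ΦA, F]
    rw [hrhs]
    rw [← Finset.sum_fiberwise Finset.univ h
      (fun i => psiRow n (h i) j * phiRow n (h i) k)]
    congr 1; ext b
    rw [Finset.sum_congr rfl
      (fun i hi => by
        rw [(Finset.mem_filter.mp hi).2]
        : ∀ i ∈ Finset.univ.filter (fun i => h i = b),
            psiRow n (h i) j * phiRow n (h i) k = psiRow n b j * phiRow n b k)]
    rw [Finset.sum_const, nsmul_eq_mul]
    simp only [m]
    ring
  have hF : F.charpoly = ∏ r : Fin n, (X - C ((m r : ℝ))) := by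
    have hbt : F.BlockTriangular id := Matrix.blockTriangular_diagonal _
    rw [Matrix.charpoly_of_upperTriangular F hbt]
    congr 1; ext r
    simp [F, Matrix.diagonal_apply_eq]
  have hcp : (Ψᵀ * Φ).charpoly = ∏ r : Fin n, (X - C ((m r : ℝ))) := by
    rw [heq, my_charpoly_conj ΨAᵀ F ΦA (mul_eq_one_comm.mp hone), hF]
  refine ⟨heq, hone, hcp, fun r => Nat.cast_nonneg _, ?_⟩
  exact (Finset.card_eq_sum_card_fiberwise
    (fun i _ => Finset.mem_univ (h i))).symm.trans (by simp)
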